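/- Let r : [0,1] → ℝ be continuously differentiable with r ≥ 0, let α : [0,1] → [0,1] be continuously differentiable, and suppose real numbers U and R satisfy U ≥ ∫₀¹ (1 - α(t))·r(t) dt and R ≥ -∫₀¹ α(t)·r'(t) dt. If α(t) = 1 - e^(t-1), then U + R ≥ (1 - 1/e)·r(0). -/

import Mathlib

theorem residual_lemma (r r' : ℝ → ℝ)
    (hderiv : ∀ t ∈ Set.Icc (0:ℝ) 1, HasDerivAt r (r' t) t)
    (hcont : ContinuousOn r' (Set.Icc (0:ℝ) 1))
    (hnonneg : ∀ t ∈ Set.Icc (0:ℝ) 1, 0 ≤ r t)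
    (α : ℝ → ℝ) (hα01 : ∀ t ∈ Set.Icc (0:ℝ) 1, α t ∈ Set.Icc (0:ℝ) 1)
    (hα : α = fun t => 1 - Real.exp (t - 1))
    (U R : ℝ)
    (hU : U ≥ ∫ t in (0:ℝ)..1, (1 - α t) * r t)
    (hR : R ≥ -∫ t in (0:ℝ)..1, α t * r' t) :
    U + R ≥ (1 - 1 / Real.exp 1) * r 0 := by
  subst hα
  have huIcc : Set.uIcc (0:ℝ) 1 = Set.Icc (0:ℝ) 1 := Set.uIcc_of_le zero_le_one
  have hrcont : ContinuousOn r (Set.Icc (0:ℝ) 1) := fun x hx =>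
    (hderiv x hx).continuousAt.continuousWithinAt
  have hu : ∀ x ∈ Set.uIcc (0:ℝ) 1,
      HasDerivAt (fun t => 1 - Real.exp (t - 1)) (-Real.exp (x - 1)) x := by
    intro x _
    have h1 : HasDerivAt (fun t : ℝ => t - 1) 1 x := by
      simpa using (hasDerivAt_id x).sub_const 1
    have h2 : HasDerivAt (fun t : ℝ => Real.exp (t - 1)) (Real.exp (x - 1)) x := by
      simpa [Function.comp_def] using (Real.hasDerivAt_exp (x - 1)).comp x h1
    simpa [Pi.sub_def] using (hasDerivAt_const x (1:ℝ)).sub h2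
  have hv : ∀ x ∈ Set.uIcc (0:ℝ) 1, HasDerivAt r (r' x) x := by
    rw [huIcc]; exact hderiv
  have hu'int : IntervalIntegrable (fun x => -Real.exp (x - 1)) MeasureTheory.volume 0 1 :=
    (Continuous.continuousOn (by continuity)).intervalIntegrable
  have hv'int : IntervalIntegrable r' MeasureTheory.volume 0 1 := by
    rw [intervalIntegrable_iff_integrableOn_Icc_of_le zero_le_one]
    exact hcont.integrableOn_compact isCompact_Icc
  have ibp := intervalIntegral.integral_mul_deriv_eq_deriv_mul hu hv hu'int hv'int
  -- ibp : ∫ (1 - exp(t-1)) * r' t = (1 - exp 0) * r 1 - (1 - exp (-1)) * r 0 - ∫ (-exp(t-1)) * r t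
  have key : (∫ t in (0:ℝ)..1, (1 - (1 - Real.exp (t - 1))) * r t)
      + (-∫ t in (0:ℝ)..1, (1 - Real.exp (t - 1)) * r' t)
      = (1 - 1 / Real.exp 1) * r 0 := by
    rw [ibp]
    have h1 : (∫ t in (0:ℝ)..1, (1 - (1 - Real.exp (t - 1))) * r t)
        = ∫ t in (0:ℝ)..1, Real.exp (t - 1) * r t := by
      congr 1; ext t; ring
    have h2 : (∫ t in (0:ℝ)..1, (-Real.exp (t - 1)) * r t)
        = -∫ t in (0:ℝ)..1, Real.exp (t - 1) * r t := by
      rw [← intervalIntegral.integral_neg]; congr 1; ext t; ring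
    rw [h1, h2]
    simp [Real.exp_neg]
  linarith [hU, hR, key]
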